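/- Let $G$ be a finite group and $\mathscr{F}$ a family of subgroups of $G$ closed under conjugation and under taking subgroups. Then there exist rational numbers $c_H$ for $H \in \mathscr{F}$, constant on conjugacy classes, whose denominators divide a power of $|G|$, such that for every $K \in \mathscr{F}$: $\sum_{[H]} c_H \, |(G/H)^K| = 1$, where the sum runs over one representative $H$ from each conjugacy class contained in $\mathscr{F}$. -/

import Mathlib

set_option linter.unusedSectionVars false
set_option maxHeartbeats 1000000

namespace Stmt11Aux

variable {G : Type*} [Group G] [Finite G]

/-- conjugate subgroup -/
abbrev cj (g : G) (H : Subgroup G) : Subgroup G :=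
  Subgroup.map (MulAut.conj g).toMonoidHom H

lemma mem_cj {g x : G} {H : Subgroup G} : x ∈ cj g H ↔ g⁻¹ * x * g ∈ H := by
  rw [show cj g H = Subgroup.map (MulAut.conj g : G ≃* G).toMonoidHom H from rfl,
    Subgroup.mem_map_equiv]
  simp [MulAut.conj, mul_assoc]

lemma cj_one (H : Subgroup G) : cj (1 : G) H = H := by
  ext x; simp [mem_cj]

lemma cj_cj (g g' : G) (H : Subgroup G) : cj g (cj g' H) = cj (g * g') H := by
  ext x; simp [mem_cj, mul_assoc]

lemma card_cj (g : G) (H : Subgroup G) : Nat.card (cj g H) = Nat.card H :=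
  (Nat.card_congr (H.equivMapOfInjective _ (MulAut.conj g).injective).toEquiv).symm

/-- conjugacy setoid on subgroups -/
def csetoid : Setoid (Subgroup G) where
  r H K := ∃ g : G, cj g H = K
  iseqv := by
    constructor
    · exact fun H => ⟨1, cj_one H⟩
    · rintro H K ⟨g, rfl⟩; exact ⟨g⁻¹, by rw [cj_cj, inv_mul_cancel, cj_one]⟩
    · rintro H K L ⟨g, rfl⟩ ⟨g', rfl⟩; exact ⟨g' * g, (cj_cj g' g H).symm⟩

noncomputable def rep (H : Subgroup G) : Subgroup G := (Quotient.mk csetoid H).out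

lemma rep_rel (H : Subgroup G) : ∃ g : G, cj g (rep H) = H :=
  Quotient.exact ((Quotient.mk csetoid H).out_eq)

lemma rep_eq_of_rel {H K : Subgroup G} (h : ∃ g : G, cj g H = K) : rep H = rep K :=
  congrArg Quotient.out (Quotient.sound h)

lemma rep_idem (H : Subgroup G) : rep (rep H) = rep H :=
  rep_eq_of_rel (rep_rel H)

/-- marks: number of K-fixed points on G/H -/
noncomputable def mrk (H K : Subgroup G) : ℕ :=
  Nat.card {x : G ⧸ H // ∀ k ∈ K, k • x = x}

lemma fixed_mk_iff (H K : Subgroup G) (a : G) :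
    (∀ k ∈ K, k • (QuotientGroup.mk a : G ⧸ H) = QuotientGroup.mk a) ↔ K ≤ cj a H := by
  have h1 : ∀ k : G, (k • (QuotientGroup.mk a : G ⧸ H) = QuotientGroup.mk a)
      ↔ a⁻¹ * k⁻¹ * a ∈ H := by
    intro k
    rw [MulAction.Quotient.smul_mk, QuotientGroup.eq]
    simp [mul_assoc, smul_eq_mul]
  constructor
  · intro hfix k hk
    rw [mem_cj]
    have := (h1 k⁻¹).mp (hfix k⁻¹ (inv_mem hk))
    simpa using this
  · intro hle k hk
    rw [h1]
    have := mem_cj.mp (hle (inv_mem hk))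
    simpa using this

lemma mrk_diag_pos (H : Subgroup G) : 0 < mrk H H := by
  have : Nonempty {x : G ⧸ H // ∀ k ∈ H, k • x = x} := by
    refine ⟨⟨QuotientGroup.mk 1, ?_⟩⟩
    rw [fixed_mk_iff]
    intro x hx
    rw [mem_cj]
    simpa using hx
  exact Nat.card_pos

lemma exists_le_cj_of_mrk_ne_zero {H K : Subgroup G} (h : mrk H K ≠ 0) :
    ∃ g : G, K ≤ cj g H := by
  have : Nonempty {x : G ⧸ H // ∀ k ∈ K, k • x = x} := by
    rcases Nat.card_ne_zero.mp h with ⟨h1, _⟩; exact h1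
  obtain ⟨x, hx⟩ := this
  obtain ⟨a, rfl⟩ := QuotientGroup.mk_surjective x
  exact ⟨a, (fixed_mk_iff H K a).mp hx⟩

lemma mrk_cj_right (H K : Subgroup G) (g : G) : mrk H (cj g K) = mrk H K := by
  apply Nat.card_congr
  refine ⟨fun x => ⟨g⁻¹ • x.1, ?_⟩, fun x => ⟨g • x.1, ?_⟩, fun x => by simp, fun x => by simp⟩
  · intro k hk
    have h2 : (g * k * g⁻¹) • x.1 = x.1 := by
      refine x.2 _ ?_
      rw [mem_cj]
      simpa [mul_assoc] using hk
    calc k • g⁻¹ • x.1 = g⁻¹ • (g * k * g⁻¹) • x.1 := by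
          simp [smul_smul, mul_assoc]
      _ = g⁻¹ • x.1 := by rw [h2]
  · intro k hk
    have h2 : (g⁻¹ * k * g) • x.1 = x.1 := x.2 _ (mem_cj.mp hk)
    calc k • g • x.1 = g • (g⁻¹ * k * g) • x.1 := by simp [smul_smul, mul_assoc]
      _ = g • x.1 := by rw [h2]

noncomputable def qe (H : Subgroup G) (g : G) : (G ⧸ H) ≃ (G ⧸ cj g H) :=
  Quotient.congr (Equiv.mulRight g⁻¹) (by
    intro a b
    rw [QuotientGroup.leftRel_apply, QuotientGroup.leftRel_apply]
    simp only [Equiv.coe_mulRight]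
    rw [mem_cj]
    constructor
    · intro h; convert h using 1; group
    · intro h; convert h using 1; group)

lemma qe_mk (H : Subgroup G) (g a : G) :
    qe H g (QuotientGroup.mk a) = QuotientGroup.mk (a * g⁻¹) := rfl

lemma mrk_cj_left (H K : Subgroup G) (g : G) : mrk (cj g H) K = mrk H K := by
  apply Nat.card_congr
  refine (Equiv.subtypeEquiv (qe H g) ?_).symm
  intro x
  obtain ⟨a, rfl⟩ := QuotientGroup.mk_surjective x
  rw [qe_mk, fixed_mk_iff, fixed_mk_iff, cj_cj]
  simp

lemma le_cj_self_iff_mem_normalizer {H : Subgroup G} {a : G} :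
    H ≤ cj a H ↔ a ∈ Subgroup.normalizer (H : Set G) := by
  constructor
  · intro hle
    have heq : H = cj a H :=
      Subgroup.eq_of_le_of_card_ge hle (le_of_eq (card_cj a H))
    rw [Subgroup.mem_normalizer_iff]
    intro h
    constructor
    · intro hh
      have : a * h * a⁻¹ ∈ cj a H := ⟨h, hh, rfl⟩
      rwa [← heq] at this
    · intro hh
      have : a * h * a⁻¹ ∈ cj a H := heq ▸ hh
      rw [mem_cj] at this
      convert this using 1; group
  · intro ha x hx
    rw [mem_cj]
    have := (Subgroup.mem_normalizer_iff.mp (inv_mem ha) x).mp hx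
    convert this using 2; group

lemma mrk_diag_dvd (H : Subgroup G) : mrk H H ∣ Nat.card G := by
  classical
  set S : Set (G ⧸ H) := {x | ∀ k ∈ H, k • x = x} with hS
  have hpre : (QuotientGroup.mk ⁻¹' S : Set G) = (Subgroup.normalizer (H : Set G) : Set G) := by
    ext a
    simp only [Set.mem_preimage, hS, Set.mem_setOf_eq, SetLike.mem_coe]
    rw [fixed_mk_iff, le_cj_self_iff_mem_normalizer]
  have hcard : Nat.card (Subgroup.normalizer (H : Set G)) = Nat.card H * Nat.card S := by
    have e1 : Subgroup.normalizer (H : Set G) ≃ (QuotientGroup.mk ⁻¹' S : Set G) :=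
      (Equiv.subtypeEquivRight (q := fun a => a ∈ Subgroup.normalizer (H : Set G)) (fun a => by
        rw [← SetLike.mem_coe, ← hpre])).symm
    rw [Nat.card_congr e1,
      Nat.card_congr (QuotientGroup.preimageMkEquivSubgroupProdSet H S), Nat.card_prod]
  have h1 : (Nat.card S) ∣ Nat.card (Subgroup.normalizer (H : Set G)) := ⟨Nat.card H, by rw [hcard, mul_comm]⟩
  have h2 : mrk H H = Nat.card S :=
    Nat.card_congr (Equiv.subtypeEquivRight (by intro x; simp [hS]))
  rw [h2]
  exact dvd_trans h1 (Subgroup.card_subgroup_dvd_card (Subgroup.normalizer (H : Set G)))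

/-- canonical representatives of conjugacy classes in F -/
noncomputable def DD (F : Set (Subgroup G)) : Finset (Subgroup G) :=
  Set.Finite.toFinset (Set.toFinite {H : Subgroup G | H ∈ F ∧ rep H = H})

lemma mem_DD {F : Set (Subgroup G)} {H : Subgroup G} :
    H ∈ DD F ↔ H ∈ F ∧ rep H = H := by
  simp [DD]

/-- the coefficients, defined on canonical representatives by downward recursion -/
noncomputable def v (F : Set (Subgroup G)) (H : Subgroup G) : ℚ :=
  (1 - ∑ H' ∈ ((DD F).filter (fun X : Subgroup G => Nat.card H < Nat.card X)).attach,
      v F H'.1 * (mrk H'.1 H : ℚ)) / (mrk H H : ℚ)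
termination_by Nat.card G - Nat.card H
decreasing_by
  have h1 : Nat.card H < Nat.card H'.1 := (Finset.mem_filter.mp H'.2).2
  have h2 : Nat.card (H'.1 : Subgroup G) ≤ Nat.card G := Subgroup.card_le_card_group _
  omega

lemma v_mul_diag (F : Set (Subgroup G)) (H : Subgroup G) :
    v F H * (mrk H H : ℚ) =
    1 - ∑ H' ∈ (DD F).filter (fun X : Subgroup G => Nat.card H < Nat.card X),
      v F H' * (mrk H' H : ℚ) := by
  rw [v, div_mul_cancel₀]
  · congr 1
    exact Finset.sum_attach _ (fun H' => v F H' * (mrk H' H : ℚ))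
  · exact Nat.cast_ne_zero.mpr (mrk_diag_pos H).ne'

/-- denominators predicate -/
def Pden (G : Type*) [Group G] (q : ℚ) : Prop :=
  ∃ (j : ℕ) (m : ℤ), q * (Nat.card G : ℚ) ^ j = (m : ℚ)

lemma Pden_natCast (G : Type*) [Group G] (n : ℕ) : Pden G (n : ℚ) :=
  ⟨0, n, by simp⟩

lemma Pden_one (G : Type*) [Group G] : Pden G 1 := ⟨0, 1, by simp⟩

lemma Pden_raise {G : Type*} [Group G] {q : ℚ} {j : ℕ} {m : ℤ}
    (h : q * (Nat.card G : ℚ) ^ j = (m : ℚ)) {t : ℕ} (hj : j ≤ t) :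
    ∃ m' : ℤ, q * (Nat.card G : ℚ) ^ t = (m' : ℚ) := by
  refine ⟨m * (Nat.card G : ℤ) ^ (t - j), ?_⟩
  have ht : (Nat.card G : ℚ) ^ t = (Nat.card G : ℚ) ^ j * (Nat.card G : ℚ) ^ (t - j) := by
    rw [← pow_add]; congr 1; omega
  rw [ht, ← mul_assoc, h]
  push_cast
  ring

lemma Pden_mul {G : Type*} [Group G] {q r : ℚ} (hq : Pden G q) (hr : Pden G r) :
    Pden G (q * r) := by
  obtain ⟨j, m, hm⟩ := hq
  obtain ⟨j', m', hm'⟩ := hr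
  refine ⟨j + j', m * m', ?_⟩
  have : q * r * (Nat.card G : ℚ) ^ (j + j')
      = (q * (Nat.card G : ℚ) ^ j) * (r * (Nat.card G : ℚ) ^ j') := by
    rw [pow_add]; ring
  rw [this, hm, hm']
  push_cast
  ring

lemma Pden_sub {G : Type*} [Group G] {q r : ℚ} (hq : Pden G q) (hr : Pden G r) :
    Pden G (q - r) := by
  obtain ⟨j, m, hm⟩ := hq
  obtain ⟨j', m', hm'⟩ := hr
  obtain ⟨a, ha⟩ := Pden_raise hm (le_max_left j j')
  obtain ⟨b, hb⟩ := Pden_raise hm' (le_max_right j j')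
  refine ⟨max j j', a - b, ?_⟩
  rw [sub_mul, ha, hb]
  push_cast
  ring

lemma Pden_zero (G : Type*) [Group G] : Pden G 0 := ⟨0, 0, by simp⟩

lemma Pden_add {G : Type*} [Group G] {q r : ℚ} (hq : Pden G q) (hr : Pden G r) :
    Pden G (q + r) := by
  have := Pden_sub hq (Pden_sub (Pden_zero G) hr)
  simpa using this

lemma Pden_sum {G : Type*} [Group G] {ι : Type*} (s : Finset ι) (f : ι → ℚ)
    (h : ∀ i ∈ s, Pden G (f i)) : Pden G (∑ i ∈ s, f i) := by
  classical
  induction s using Finset.induction_on with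
  | empty => simpa using Pden_zero G
  | insert _ _ hx ih =>
    rw [Finset.sum_insert hx]
    exact Pden_add (h _ (Finset.mem_insert_self _ _))
      (ih fun i hi => h i (Finset.mem_insert_of_mem hi))

lemma Pden_div {G : Type*} [Group G] {q : ℚ} (d : ℕ) (hd : d ∣ Nat.card G)
    (hd0 : d ≠ 0) (h : Pden G q) : Pden G (q / (d : ℚ)) := by
  obtain ⟨j, m, hm⟩ := h
  obtain ⟨k, hk⟩ := hd
  refine ⟨j + 1, m * k, ?_⟩
  have hdq : (d : ℚ) ≠ 0 := Nat.cast_ne_zero.mpr hd0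
  have hNq : (Nat.card G : ℚ) = (d : ℚ) * (k : ℚ) := by rw [hk]; push_cast; ring
  have : q / (d : ℚ) * (Nat.card G : ℚ) ^ (j + 1)
      = (q * (Nat.card G : ℚ) ^ j) * ((Nat.card G : ℚ) / d) := by
    rw [pow_succ]; ring
  rw [this, hm, hNq]
  field_simp
  push_cast
  ring

theorem v_den {G : Type*} [Group G] [Finite G] (F : Set (Subgroup G)) (H : Subgroup G) :
    Pden G (v F H) := by
  rw [v]
  apply Pden_div _ (mrk_diag_dvd H) (mrk_diag_pos H).ne'
  apply Pden_sub (Pden_one G)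
  apply Pden_sum
  intro i hi
  exact Pden_mul (v_den F i.1) (Pden_natCast G _)
termination_by Nat.card G - Nat.card H
decreasing_by
  have h1 : Nat.card H < Nat.card i.1 := (Finset.mem_filter.mp i.2).2
  have h2 : Nat.card (i.1 : Subgroup G) ≤ Nat.card G := Subgroup.card_le_card_group _
  omega

lemma mrk_eq_zero_of {H K : Subgroup G} (hH : rep H = H) (hK : rep K = K)
    (hne : H ≠ K) (hcard : Nat.card H ≤ Nat.card K) : mrk H K = 0 := by
  by_contra h
  obtain ⟨g, hle⟩ := exists_le_cj_of_mrk_ne_zero h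
  have h1 : Nat.card K ≤ Nat.card (cj g H) := Subgroup.card_le_of_le hle
  rw [card_cj] at h1
  have h2 : Nat.card (cj g H) ≤ Nat.card K := by
    rw [card_cj]; omega
  have heq : K = cj g H := Subgroup.eq_of_le_of_card_ge hle h2
  have : rep H = rep K := rep_eq_of_rel ⟨g, heq.symm⟩
  exact hne (by rw [← hH, this, hK])

lemma key (F : Set (Subgroup G))
    (hconj : ∀ H ∈ F, ∀ g : G, cj g H ∈ F) {K : Subgroup G} (hK : K ∈ F) :
    ∑ H ∈ DD F, v F H * (mrk H K : ℚ) = 1 := by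
  obtain ⟨g, hg⟩ := rep_rel K
  set K0 := rep K with hK0
  have hK0F : K0 ∈ F := by
    have : cj g⁻¹ K = K0 := by rw [← hg, cj_cj, inv_mul_cancel, cj_one]
    rw [← this]; exact hconj K hK g⁻¹
  have hK0D : K0 ∈ DD F := mem_DD.mpr ⟨hK0F, by rw [hK0, rep_idem]⟩
  have hmK : ∀ H : Subgroup G, mrk H K = mrk H K0 := fun H => by
    rw [← hg, mrk_cj_right]
  simp_rw [hmK]
  rw [← Finset.sum_filter_add_sum_filter_not (DD F)
    (fun X : Subgroup G => Nat.card K0 < Nat.card X)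
    (fun H => v F H * (mrk H K0 : ℚ))]
  have hsecond : ∑ H ∈ (DD F).filter (fun X : Subgroup G => ¬ Nat.card K0 < Nat.card X),
      v F H * (mrk H K0 : ℚ) = v F K0 * (mrk K0 K0 : ℚ) := by
    apply Finset.sum_eq_single_of_mem K0 (Finset.mem_filter.mpr ⟨hK0D, by simp⟩)
    intro H hH hne
    have h1 := Finset.mem_filter.mp hH
    have hz : mrk H K0 = 0 :=
      mrk_eq_zero_of (mem_DD.mp h1.1).2 (by rw [hK0, rep_idem]) hne
        (by have := h1.2; omega)
    rw [hz]
    simp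
  rw [hsecond, v_mul_diag]
  ring

end Stmt11Aux

open Stmt11Aux in
theorem stmt_11 {G : Type*} [Group G] [Finite G]
    (F : Set (Subgroup G))
    (hconj : ∀ H ∈ F, ∀ g : G, Subgroup.map (MulAut.conj g).toMonoidHom H ∈ F)
    (hsub : ∀ H ∈ F, ∀ K : Subgroup G, K ≤ H → K ∈ F) :
    ∃ c : Subgroup G → ℚ,
      (∀ H ∈ F, ∀ g : G, c (Subgroup.map (MulAut.conj g).toMonoidHom H) = c H) ∧
      (∀ H ∈ F, ∃ (j : ℕ) (m : ℤ), c H * (Nat.card G : ℚ) ^ j = (m : ℚ)) ∧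
      (∀ R : Finset (Subgroup G), ↑R ⊆ F →
        (∀ H ∈ F, ∃! H' : Subgroup G, H' ∈ R ∧
          ∃ g : G, Subgroup.map (MulAut.conj g).toMonoidHom H = H') →
        ∀ K ∈ F, ∑ H ∈ R, c H *
          (Nat.card {x : G ⧸ H // ∀ k ∈ K, k • x = x} : ℚ) = 1) := by
  classical
  refine ⟨fun H => if H ∈ F then v F (rep H) else 0, ?_, ?_, ?_⟩
  · intro H hH g
    have hF2 := hconj H hH g
    have h1 : rep (Subgroup.map (MulAut.conj g).toMonoidHom H) = rep H :=
      (rep_eq_of_rel ⟨g, rfl⟩).symm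
    show (if Subgroup.map (MulAut.conj g).toMonoidHom H ∈ F then
        v F (rep (Subgroup.map (MulAut.conj g).toMonoidHom H)) else 0)
      = (if H ∈ F then v F (rep H) else 0)
    rw [if_pos hF2, if_pos hH, h1]
  · intro H hH
    obtain ⟨j, m, hm⟩ := v_den F (rep H)
    exact ⟨j, m, by simpa [hH] using hm⟩
  · intro R hR1 hR2 K hK
    have hstep : ∑ H ∈ R, (if H ∈ F then v F (rep H) else 0) *
        (Nat.card {x : G ⧸ H // ∀ k ∈ K, k • x = x} : ℚ)
        = ∑ H' ∈ DD F, v F H' * (mrk H' K : ℚ) := by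
      refine Finset.sum_bij (fun H _ => rep H) ?_ ?_ ?_ ?_
      · intro H hH
        have hF : H ∈ F := hR1 (Finset.mem_coe.mpr hH)
        refine mem_DD.mpr ⟨?_, rep_idem H⟩
        obtain ⟨a, ha⟩ := rep_rel H
        have h2 : cj a⁻¹ H = rep H := by
          conv_lhs => rw [← ha]
          rw [cj_cj, inv_mul_cancel, cj_one]
        have h3 : cj a⁻¹ H ∈ F := hconj H hF a⁻¹
        rw [h2] at h3
        exact h3
      · intro H1 h1 H2 h2 hrep
        have hrep' : rep H1 = rep H2 := hrep
        obtain ⟨a, ha⟩ := rep_rel H1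
        obtain ⟨b, hb⟩ := rep_rel H2
        have hH2 : cj (b * a⁻¹) H1 = H2 := by
          conv_lhs => rw [← ha]
          rw [cj_cj]
          have e : b * a⁻¹ * a = b := by group
          rw [e, hrep', hb]
        obtain ⟨U, hU, hUuniq⟩ := hR2 H1 (hR1 (Finset.mem_coe.mpr h1))
        have e1 : H1 = U := hUuniq H1 ⟨h1, 1, cj_one H1⟩
        have e2 : H2 = U := hUuniq H2 ⟨h2, b * a⁻¹, hH2⟩
        rw [e1, e2]
      · intro H' hH'
        have hF : H' ∈ F := (mem_DD.mp hH').1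
        obtain ⟨U, ⟨hUR, g', hg'⟩, _⟩ := hR2 H' hF
        refine ⟨U, hUR, ?_⟩
        show rep U = H'
        have h4 : rep H' = rep U := rep_eq_of_rel ⟨g', hg'⟩
        rw [← h4]
        exact (mem_DD.mp hH').2
      · intro H hH
        have hF : H ∈ F := hR1 (Finset.mem_coe.mpr hH)
        obtain ⟨a, ha⟩ := rep_rel H
        have hm : mrk (cj a (rep H)) K = mrk (rep H) K := mrk_cj_left (rep H) K a
        rw [ha] at hm
        show (if H ∈ F then v F (rep H) else 0) *
            (Nat.card {x : G ⧸ H // ∀ k ∈ K, k • x = x} : ℚ)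
          = v F (rep H) * (mrk (rep H) K : ℚ)
        rw [if_pos hF, ← hm]
        rfl
    rw [hstep, key F hconj hK]
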